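/- Let ω > 0 and ε be real numbers with 0 < ε < 2/ω, and let L = !![1 − ε^2*ω^2/2, ε; −ε*ω^2*(1 − ε^2*ω^2/4), 1 − ε^2*ω^2/2] be the one-step matrix of the leapfrog integrator with step size ε for the harmonic oscillator q̇ = p, ṗ = −ω²q (obtained from p½ = p − (ε/2)ω²q, q' = q + ε p½, p' = p½ − (ε/2)ω²q'). Then det L = 1 and the characteristic polynomial of L.map Complex.ofReal has two distinct roots, each of modulus one. Hence the leapfrog integrator is stable for the harmonic oscillator when ε < 2/ω. -/

import Mathlib

open Matrix Polynomial

/-- **Leapfrog half of Proposition D.1 of the paper.** For the harmonic oscillator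
`q̇ = p, ṗ = −ω²q`, the one-step leapfrog matrix
`L = [[1 − ε²ω²/2, ε], [−εω²(1 − ε²ω²/4), 1 − ε²ω²/2]]` with step size `0 < ε < 2/ω`
has unit determinant and its characteristic polynomial has two distinct roots, each of
modulus one: the leapfrog integrator is stable when `ε < 2/ω`. -/
lemma charpoly_fin_two' (M : Matrix (Fin 2) (Fin 2) ℂ) :
    M.charpoly = X ^ 2 - C M.trace * X + C M.det := by
  rw [Matrix.charpoly, Matrix.det_fin_two, Matrix.charmatrix_apply_eq,
    Matrix.charmatrix_apply_eq, Matrix.charmatrix_apply_ne _ _ _ (by decide),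
    Matrix.charmatrix_apply_ne _ _ _ (by decide), Matrix.trace_fin_two, Matrix.det_fin_two]
  simp only [Polynomial.C_mul, Polynomial.C_sub, Polynomial.C_add]
  ring

theorem leapfrog_stable_harmonic_oscillator
    (ω ε : ℝ) (hω : 0 < ω) (hε : 0 < ε) (hεω : ε < 2 / ω)
    (L : Matrix (Fin 2) (Fin 2) ℝ)
    (hL : L = !![1 - ε ^ 2 * ω ^ 2 / 2, ε;
                 -ε * ω ^ 2 * (1 - ε ^ 2 * ω ^ 2 / 4), 1 - ε ^ 2 * ω ^ 2 / 2]) :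
    L.det = 1 ∧
    ∃ lam₁ lam₂ : ℂ, lam₁ ≠ lam₂ ∧ ‖lam₁‖ = 1 ∧ ‖lam₂‖ = 1 ∧
      (L.map Complex.ofReal).charpoly = (X - C lam₁) * (X - C lam₂) := by
  have hεω' : ε * ω < 2 := (lt_div_iff₀ hω).mp hεω
  set a : ℝ := 1 - ε ^ 2 * ω ^ 2 / 2 with ha
  have hx : 0 < ε ^ 2 * ω ^ 2 := by positivity
  have hx4 : ε ^ 2 * ω ^ 2 < 4 := by
    have h1 : ε * ω < 2 := hεω'
    have h0 : 0 < ε * ω := by positivity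
    nlinarith
  have ha1 : a ^ 2 < 1 := by
    rw [ha]; nlinarith
  set b : ℝ := Real.sqrt (1 - a ^ 2) with hb
  have hbpos : 0 < b := Real.sqrt_pos.mpr (by linarith)
  have hb2 : b ^ 2 = 1 - a ^ 2 := Real.sq_sqrt (by linarith)
  set lam₁ : ℂ := Complex.mk a b with hl1
  set lam₂ : ℂ := Complex.mk a (-b) with hl2
  have habs : ∀ lam : ℂ, lam.re = a → lam.im ^ 2 = b ^ 2 → ‖lam‖ = 1 := by
    intro lam hre him
    have : ‖lam‖ ^ 2 = 1 := by
      rw [Complex.sq_norm, Complex.normSq_apply, hre, ← sq, ← sq, him, hb2]; ring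
    nlinarith [norm_nonneg lam]
  have hdet : L.det = 1 := by
    subst hL
    simp [Matrix.det_fin_two_of]
    ring
  refine ⟨hdet, lam₁, lam₂, ?_, habs lam₁ rfl rfl, habs lam₂ rfl (by show (-b) ^ 2 = b ^ 2; ring), ?_⟩
  · intro h
    have : b = -b := congrArg Complex.im h
    linarith
  · have htr : (L.map Complex.ofReal).trace = 2 * a := by
      subst hL
      simp [Matrix.trace_fin_two, ha]
      push_cast
      ring
    have hdet' : (L.map Complex.ofReal).det = 1 := by
      have h := (Complex.ofRealHom.map_det L).symm
      simp only [RingHom.mapMatrix_apply] at h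
      have : Complex.ofRealHom.mapMatrix L = L.map Complex.ofReal := rfl
      rw [Complex.ofRealHom.map_det, RingHom.mapMatrix_apply] at *
      rw [show (Complex.ofReal : ℝ → ℂ) = ⇑Complex.ofRealHom from rfl, ← RingHom.mapMatrix_apply,
        ← RingHom.map_det, hdet]
      simp
    rw [charpoly_fin_two', htr, hdet']
    have hsum : lam₁ + lam₂ = 2 * a := by
      apply Complex.ext <;> simp [hl1, hl2] <;> ring
    have hprod : lam₁ * lam₂ = 1 := by
      apply Complex.ext <;> simp [hl1, hl2, Complex.ext_iff] <;> nlinarith [hb2]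
    rw [← hsum, ← hprod]
    simp only [Polynomial.C_add, Polynomial.C_mul]
    ring
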